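/- arXiv:2211.06051 — 2 statements merged into one kernel-verified Lean document; each statement's English description precedes it below -/
import Mathlib

section
/- Let M and M₂ be n×n complex matrices and let p be real with 1 < p. Consider the nonlinear eigenvalue problem Mᴴ·(d(z)∘(M·z)) = λ·(|z|^{p−2}∘z), where d(z)ᵢ = |(M₂·z)ᵢ|^{p−2} and ∘ is the entrywise (Hadamard) product (convention 0^{p−2}·0 = 0 for the right-hand side). If z ≠ 0 and λ ∈ ℂ satisfy this equation, then λ is real and λ ≥ 0. -/
open Matrix BigOperators

/-- `phi p v = |v|^(p-2) · v`, with the convention `0^(p-2) · 0 = 0`. -/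
noncomputable def phi (p : ℝ) (v : ℂ) : ℂ :=
  ((‖v‖ ^ (p - 2) : ℝ) : ℂ) * v

lemma conj_mul_phi (p : ℝ) (hp : 0 < p) (v : ℂ) :
    (starRingEnd ℂ) v * phi p v = ((‖v‖ ^ p : ℝ) : ℂ) := by
  rcases eq_or_ne v 0 with h | h
  · simp [phi, h, Real.zero_rpow hp.ne']
  · have hv : 0 < ‖v‖ := norm_pos_iff.mpr h
    unfold phi
    rw [mul_left_comm, ← Complex.normSq_eq_conj_mul_self, ← Complex.sq_norm]
    norm_cast
    rw [← Real.rpow_natCast (‖v‖) 2, ← Real.rpow_add hv]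
    norm_num

lemma conj_mul_d (c : ℝ) (v : ℂ) :
    (starRingEnd ℂ) v * ((c : ℝ) * v) = (c : ℂ) * ((‖v‖ : ℝ) : ℂ) ^ 2 := by
  rw [mul_left_comm, ← Complex.normSq_eq_conj_mul_self, ← Complex.sq_norm]
  push_cast
  ring

/-- For the nonlinear eigenvalue problem `Mᴴ(|M₂z|^{p−2} ∘ Mz) = λ (|z|^{p−2} ∘ z)`
(the problem `M₁(|M₂z|^{p−2} ∘ M₃z) = λ |z|^{p−2} ∘ z` with `M₃ = M₁ᴴ = M`),
every eigenvalue is real and nonnegative. -/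
theorem eigenvalues_real_nonneg {n : ℕ} (M M₂ : Matrix (Fin n) (Fin n) ℂ)
    (p : ℝ) (hp : 1 < p) (z : Fin n → ℂ) (hz : z ≠ 0) (lam : ℂ)
    (heig : Mᴴ.mulVec
        (fun i => ((‖M₂.mulVec z i‖ ^ (p - 2) : ℝ) : ℂ) * M.mulVec z i) =
      lam • fun i => phi p (z i)) :
    lam.im = 0 ∧ 0 ≤ lam.re := by
  classical
  have hp0 : (0 : ℝ) < p := lt_trans one_pos hp
  set S : ℝ := ∑ j, ‖M₂.mulVec z j‖ ^ (p - 2) * ‖M.mulVec z j‖ ^ 2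
    with hS
  set T : ℝ := ∑ i, ‖z i‖ ^ p with hT
  have key := congrArg (fun v => dotProduct (star z) v) heig
  have hL : dotProduct (star z)
      (Mᴴ.mulVec (fun i => ((‖M₂.mulVec z i‖ ^ (p - 2) : ℝ) : ℂ) * M.mulVec z i))
      = ((S : ℝ) : ℂ) := by
    rw [Matrix.dotProduct_mulVec, ← Matrix.star_mulVec]
    simp only [dotProduct, Pi.star_apply, hS]
    push_cast
    refine Finset.sum_congr rfl fun j _ => ?_
    exact conj_mul_d _ _
  have hR : dotProduct (star z) (lam • fun i => phi p (z i)) = lam * ((T : ℝ) : ℂ) := by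
    rw [dotProduct_smul]
    simp only [smul_eq_mul]
    congr 1
    simp only [dotProduct, Pi.star_apply, hT]
    push_cast
    refine Finset.sum_congr rfl fun i _ => ?_
    exact conj_mul_phi p hp0 (z i)
  rw [hL, hR] at key
  have hT0 : 0 < T := by
    obtain ⟨i, hi⟩ : ∃ i, z i ≠ 0 := by
      by_contra h
      push_neg at h
      exact hz (funext h)
    refine Finset.sum_pos' (fun j _ => Real.rpow_nonneg (norm_nonneg _) _)
      ⟨i, Finset.mem_univ i, Real.rpow_pos_of_pos (norm_pos_iff.mpr hi) p⟩
  have hS0 : 0 ≤ S := by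
    refine Finset.sum_nonneg fun j _ => ?_
    positivity
  have hTc : ((T : ℝ) : ℂ) ≠ 0 := Complex.ofReal_ne_zero.mpr hT0.ne'
  have hlam : lam = ((S / T : ℝ) : ℂ) := by
    push_cast
    rw [key, mul_div_assoc, div_self hTc, mul_one]
  constructor
  · rw [hlam]; exact Complex.ofReal_im _
  · rw [hlam, Complex.ofReal_re]
    exact div_nonneg hS0 hT0.le
end

section
/- Let M and M₂ be 2×2 complex matrices and let p be real with p ≥ 2. Then the nonlinear eigenvalue problem Mᴴ·(d(z)∘(M·z)) = λ·(|z|^{p−2}∘z) on ℂ², where d(z)ᵢ = |(M₂·z)ᵢ|^{p−2}, has nonempty spectrum: there exist z ∈ ℂ² with z ≠ 0 and λ ∈ ℂ satisfying the equation. -/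
open Matrix BigOperators

noncomputable def Fv (M M₂ : Matrix (Fin 2) (Fin 2) ℂ) (p : ℝ) (z : Fin 2 → ℂ) : Fin 2 → ℂ :=
  Mᴴ.mulVec fun i => ((‖M₂.mulVec z i‖ ^ (p - 2) : ℝ) : ℂ) * M.mulVec z i

noncomputable def hh (M M₂ : Matrix (Fin 2) (Fin 2) ℂ) (p : ℝ) (w : ℂ) : ℂ :=
  phi p w * Fv M M₂ p ![1, w] 0 - Fv M M₂ p ![1, w] 1

lemma phi_zero (p : ℝ) : phi p 0 = 0 := by simp [phi]

lemma phi_one (p : ℝ) : phi p 1 = 1 := by simp [phi]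

lemma Fv_apply (M M₂ : Matrix (Fin 2) (Fin 2) ℂ) (p : ℝ) (a b : ℂ) (i : Fin 2) :
    Fv M M₂ p ![a, b] i =
      (starRingEnd ℂ) (M 0 i) *
        (((‖M₂ 0 0 * a + M₂ 0 1 * b‖ ^ (p - 2) : ℝ) : ℂ) * (M 0 0 * a + M 0 1 * b)) +
      (starRingEnd ℂ) (M 1 i) *
        (((‖M₂ 1 0 * a + M₂ 1 1 * b‖ ^ (p - 2) : ℝ) : ℂ) * (M 1 0 * a + M 1 1 * b)) := by
  simp [Fv, Matrix.mulVec, dotProduct, Fin.sum_univ_two, Matrix.conjTranspose_apply]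

lemma cc_mul (p : ℝ) (hp : 2 ≤ p) (t v : ℂ) :
    ((‖t * v‖ ^ (p - 2) : ℝ) : ℂ) =
      ((‖t‖ ^ (p - 2) : ℝ) : ℂ) * ((‖v‖ ^ (p - 2) : ℝ) : ℂ) := by
  rw [norm_mul, Real.mul_rpow (norm_nonneg t) (norm_nonneg v), Complex.ofReal_mul]

lemma Fv_smul (M M₂ : Matrix (Fin 2) (Fin 2) ℂ) (p : ℝ) (hp : 2 ≤ p) (t a b : ℂ) (i : Fin 2) :
    Fv M M₂ p ![t * a, t * b] i = phi p t * Fv M M₂ p ![a, b] i := by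
  rw [Fv_apply, Fv_apply,
    show M₂ 0 0 * (t * a) + M₂ 0 1 * (t * b) = t * (M₂ 0 0 * a + M₂ 0 1 * b) by ring,
    show M₂ 1 0 * (t * a) + M₂ 1 1 * (t * b) = t * (M₂ 1 0 * a + M₂ 1 1 * b) by ring,
    show M 0 0 * (t * a) + M 0 1 * (t * b) = t * (M 0 0 * a + M 0 1 * b) by ring,
    show M 1 0 * (t * a) + M 1 1 * (t * b) = t * (M 1 0 * a + M 1 1 * b) by ring,
    cc_mul p hp, cc_mul p hp, phi]
  ring

lemma cont_cc (p : ℝ) (hp : 2 ≤ p) :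
    Continuous fun v : ℂ => (((‖v‖ ^ (p - 2) : ℝ)) : ℂ) :=
  Complex.continuous_ofReal.comp <| continuous_iff_continuousAt.2 fun _ =>
    (Real.continuousAt_rpow_const _ _ (Or.inr (by linarith))).comp
      continuous_norm.continuousAt

lemma cont_phi (p : ℝ) (hp : 2 ≤ p) : Continuous (phi p) :=
  (cont_cc p hp).mul continuous_id

set_option maxHeartbeats 1000000 in
lemma cont_Fv (M M₂ : Matrix (Fin 2) (Fin 2) ℂ) (p : ℝ) (hp : 2 ≤ p) (i : Fin 2) :
    Continuous fun x : ℂ × ℂ => Fv M M₂ p ![x.1, x.2] i := by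
  simp only [Fv_apply]
  have hl : ∀ c d : ℂ, Continuous fun x : ℂ × ℂ => c * x.1 + d * x.2 := by
    intro c d; fun_prop
  have A1 : Continuous fun x : ℂ × ℂ =>
      ((‖M₂ 0 0 * x.1 + M₂ 0 1 * x.2‖ ^ (p - 2) : ℝ) : ℂ) :=
    (cont_cc p hp).comp (hl _ _)
  have A2 : Continuous fun x : ℂ × ℂ =>
      ((‖M₂ 1 0 * x.1 + M₂ 1 1 * x.2‖ ^ (p - 2) : ℝ) : ℂ) :=
    (cont_cc p hp).comp (hl _ _)
  exact (continuous_const.mul (A1.mul (hl _ _))).add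
    (continuous_const.mul (A2.mul (hl _ _)))

set_option maxHeartbeats 1000000 in
lemma cont_Fv1 (M M₂ : Matrix (Fin 2) (Fin 2) ℂ) (p : ℝ) (hp : 2 ≤ p) (i : Fin 2) :
    Continuous fun w : ℂ => Fv M M₂ p ![1, w] i := by
  simp only [Fv_apply]
  have hl : ∀ c d : ℂ, Continuous fun w : ℂ => c * 1 + d * w := by
    intro c d; fun_prop
  have A1 : Continuous fun w : ℂ =>
      ((‖M₂ 0 0 * 1 + M₂ 0 1 * w‖ ^ (p - 2) : ℝ) : ℂ) :=
    (cont_cc p hp).comp (hl _ _)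
  have A2 : Continuous fun w : ℂ =>
      ((‖M₂ 1 0 * 1 + M₂ 1 1 * w‖ ^ (p - 2) : ℝ) : ℂ) :=
    (cont_cc p hp).comp (hl _ _)
  exact (continuous_const.mul (A1.mul (hl _ _))).add
    (continuous_const.mul (A2.mul (hl _ _)))

set_option maxHeartbeats 1000000 in
lemma cont_Fvu (M M₂ : Matrix (Fin 2) (Fin 2) ℂ) (p : ℝ) (hp : 2 ≤ p) (i : Fin 2) :
    Continuous fun u : ℂ => Fv M M₂ p ![u, 1] i := by
  simp only [Fv_apply]
  have hl : ∀ c d : ℂ, Continuous fun u : ℂ => c * u + d * 1 := by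
    intro c d; fun_prop
  have A1 : Continuous fun u : ℂ =>
      ((‖M₂ 0 0 * u + M₂ 0 1 * 1‖ ^ (p - 2) : ℝ) : ℂ) :=
    (cont_cc p hp).comp (hl _ _)
  have A2 : Continuous fun u : ℂ =>
      ((‖M₂ 1 0 * u + M₂ 1 1 * 1‖ ^ (p - 2) : ℝ) : ℂ) :=
    (cont_cc p hp).comp (hl _ _)
  exact (continuous_const.mul (A1.mul (hl _ _))).add
    (continuous_const.mul (A2.mul (hl _ _)))

lemma cont_hh (M M₂ : Matrix (Fin 2) (Fin 2) ℂ) (p : ℝ) (hp : 2 ≤ p) :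
    Continuous (hh M M₂ p) :=
  ((cont_phi p hp).mul (cont_Fv1 M M₂ p hp 0)).sub (cont_Fv1 M M₂ p hp 1)

lemma prod_div_telescope (f : ℕ → ℂ) (n : ℕ) (hf : ∀ k, k ≤ n → f k ≠ 0) :
    ∏ k ∈ Finset.range n, f (k + 1) / f k = f n / f 0 := by
  induction n with
  | zero => simp [div_self (hf 0 le_rfl)]
  | succ N ih =>
    rw [Finset.prod_range_succ, ih fun k hk => hf k (hk.trans (Nat.le_succ N))]
    have h0 := hf 0 (Nat.zero_le _)
    have hN := hf N (Nat.le_succ_of_le (Nat.le_refl N))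
    field_simp

lemma phip_abs (p : ℝ) (hp : 2 ≤ p) (w : ℂ) :
    ‖phi p w‖ = ‖w‖ ^ (p - 1) := by
  rw [phi, norm_mul, Complex.norm_real, Real.norm_eq_abs,
    abs_of_nonneg (Real.rpow_nonneg (norm_nonneg w) _)]
  rcases eq_or_ne (‖w‖) 0 with h | h
  · rw [h, mul_zero, Real.zero_rpow (by intro hc; linarith [hc] : p - 1 ≠ 0)]
  · have hx : 0 < ‖w‖ := lt_of_le_of_ne (norm_nonneg w) (Ne.symm h)
    calc ‖w‖ ^ (p - 2) * ‖w‖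
        = ‖w‖ ^ (p - 2) * ‖w‖ ^ (1 : ℝ) := by rw [Real.rpow_one]
      _ = ‖w‖ ^ (p - 2 + 1) := (Real.rpow_add hx _ _).symm
      _ = ‖w‖ ^ (p - 1) := by ring_nf

noncomputable def eC (t : ℝ) : ℂ := Complex.exp (((2 * Real.pi * t : ℝ) : ℂ) * Complex.I)

lemma abs_eC (t : ℝ) : ‖eC t‖ = 1 := by
  simp [eC, Complex.norm_exp]

lemma eC_zero : eC 0 = 1 := by simp [eC]

lemma eC_one : eC 1 = 1 := by
  have : ((2 * Real.pi * (1:ℝ) : ℝ) : ℂ) * Complex.I = 2 * (Real.pi : ℂ) * Complex.I := by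
    push_cast; ring
  rw [eC, this, Complex.exp_two_pi_mul_I]

lemma cont_eC : Continuous eC :=
  Complex.continuous_exp.comp
    ((Complex.continuous_ofReal.comp (continuous_const.mul continuous_id)).mul continuous_const)

lemma eC_ne (t : ℝ) : eC t ≠ 0 := Complex.exp_ne_zero _

set_option maxHeartbeats 2000000 in
lemma noSol (M M₂ : Matrix (Fin 2) (Fin 2) ℂ) (p : ℝ) (hp : 2 ≤ p)
    (hβ : Fv M M₂ p ![0, 1] 0 ≠ 0) (h0 : ∀ w, hh M M₂ p w ≠ 0) : False := by
  set β := Fv M M₂ p ![0, 1] 0 with hβdef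
  set F0 : ℂ → ℂ := fun u => Fv M M₂ p ![u, 1] 0 with hF0def
  set F1 : ℂ → ℂ := fun u => Fv M M₂ p ![u, 1] 1 with hF1def
  have hF0c : Continuous F0 := cont_Fvu M M₂ p hp 0
  have hF1c : Continuous F1 := cont_Fvu M M₂ p hp 1
  have habsβ : 0 < ‖β‖ := norm_pos_iff.mpr hβ
  -- bound for F1 on the closed unit ball
  obtain ⟨x₀, hx₀mem, hx₀max⟩ :=
    (isCompact_closedBall (0 : ℂ) 1).exists_isMaxOn ⟨0, by simp⟩
      (continuous_norm.comp hF1c).continuousOn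
  set B := ‖F1 x₀‖ with hBdef
  have hB : ∀ u : ℂ, ‖u‖ ≤ 1 → ‖F1 u‖ ≤ B := by
    intro u hu
    exact hx₀max (by simpa [Metric.mem_closedBall, Complex.dist_eq] using hu)
  have hB0 : 0 ≤ B := norm_nonneg _
  -- continuity of F0 at 0 : F0 0 = β
  have hF00 : F0 0 = β := by rw [hF0def]
  obtain ⟨δ, hδpos, hδ⟩ := Metric.continuousAt_iff.1 hF0c.continuousAt (‖β‖ / 2)
    (by positivity)
  -- choice of R
  set R := max (max 1 (2 / δ)) (2 * B / ‖β‖ + 1) with hRdef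
  have hR1 : (1 : ℝ) ≤ R := (le_max_left _ _).trans (le_max_left _ _)
  have hRpos : (0 : ℝ) < R := lt_of_lt_of_le one_pos hR1
  have hRδ : 1 / R < δ := by
    have h2δ : 2 / δ ≤ R := (le_max_right 1 (2 / δ)).trans (le_max_left _ _)
    rw [div_le_iff₀ hδpos] at h2δ
    rw [div_lt_iff₀ hRpos]
    nlinarith
  have hRB : 2 * B / ‖β‖ < R :=
    lt_of_lt_of_le (lt_add_one _) (le_max_right _ _)
  set P := R ^ (p - 1) with hPdef
  have hPR : R ≤ P := by
    calc R = R ^ (1 : ℝ) := (Real.rpow_one R).symm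
    _ ≤ P := Real.rpow_le_rpow_of_exponent_le hR1 (by linarith)
  have hPpos : 0 < P := Real.rpow_pos_of_pos hRpos _
  -- the comparison map
  set L : ℂ → ℂ := fun w => phi p w * (phi p w * β) with hLdef
  have hLabs : ∀ w, ‖w‖ = R → ‖L w‖ = P * (P * ‖β‖) := by
    intro w hw
    rw [hLdef]
    simp only [norm_mul]
    rw [phip_abs p hp, hw]
  have hLc : Continuous L := (cont_phi p hp).mul ((cont_phi p hp).mul continuous_const)
  have hLne : ∀ w, ‖w‖ = R → L w ≠ 0 := by
    intro w hw hc
    have h1 := hLabs w hw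
    rw [hc] at h1
    simp only [norm_zero] at h1
    have h2 : 0 < P * (P * ‖β‖) := by positivity
    linarith
  -- the key estimate
  have Hest : ∀ w : ℂ, ‖w‖ = R →
      ‖hh M M₂ p w - L w‖ < ‖L w‖ := by
    intro w hwR
    have hw0 : w ≠ 0 := by
      intro hc; rw [hc] at hwR; simp at hwR; linarith
    have hsc : ∀ i, Fv M M₂ p ![1, w] i = phi p w * Fv M M₂ p ![w⁻¹, 1] i := by
      intro i
      have := Fv_smul M M₂ p hp w w⁻¹ 1 i
      rwa [mul_inv_cancel₀ hw0, mul_one] at this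
    have hid : hh M M₂ p w - L w = phi p w * (phi p w * (F0 w⁻¹ - β) - F1 w⁻¹) := by
      rw [hh, hsc 0, hsc 1, hLdef, hF0def, hF1def]
      ring
    have huabs : ‖w⁻¹‖ = 1 / R := by
      rw [norm_inv, hwR, one_div]
    have hu1 : ‖w⁻¹‖ ≤ 1 := by
      rw [huabs]
      rw [div_le_one hRpos]
      exact hR1
    have hF0u : ‖F0 w⁻¹ - β‖ ≤ ‖β‖ / 2 := by
      have := hδ (x := w⁻¹) (by rwa [Complex.dist_eq, sub_zero, huabs])
      rw [hF00] at this
      rw [Complex.dist_eq] at this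
      exact le_of_lt this
    have hF1u : ‖F1 w⁻¹‖ ≤ B := hB _ hu1
    have habsphi : ‖phi p w‖ = P := by rw [phip_abs p hp, hwR]
    have hBP : 2 * B < P * ‖β‖ := by
      rw [div_lt_iff₀ habsβ] at hRB
      nlinarith
    calc ‖hh M M₂ p w - L w‖
        = P * ‖phi p w * (F0 w⁻¹ - β) - F1 w⁻¹‖ := by
          rw [hid, norm_mul, habsphi]
      _ ≤ P * (‖phi p w * (F0 w⁻¹ - β)‖ + ‖F1 w⁻¹‖) := by
          have := norm_sub_le (phi p w * (F0 w⁻¹ - β)) (F1 w⁻¹)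
          nlinarith [norm_nonneg (phi p w * (F0 w⁻¹ - β) - F1 w⁻¹)]
      _ ≤ P * (P * (‖β‖ / 2) + B) := by
          rw [norm_mul, habsphi]
          gcongr
      _ < P * (P * ‖β‖) := by nlinarith
      _ = ‖L w‖ := (hLabs w hwR).symm
  -- the homotopy
  set A : ℝ → ℝ → ℂ := fun s t =>
    ((1 - max (2 * s - 1) 0 : ℝ) : ℂ) * hh M M₂ p (((min (2 * s) 1 * R : ℝ) : ℂ) * eC t) +
    ((max (2 * s - 1) 0 : ℝ) : ℂ) * L (((R : ℝ) : ℂ) * eC t) with hAdef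
  have hAcont : Continuous fun x : ℝ × ℝ => A x.1 x.2 := by
    rw [hAdef]
    apply Continuous.add
    · apply Continuous.mul
      · exact Complex.continuous_ofReal.comp (by fun_prop)
      · refine (cont_hh M M₂ p hp).comp (Continuous.mul ?_ (cont_eC.comp continuous_snd))
        exact Complex.continuous_ofReal.comp (by fun_prop)
    · apply Continuous.mul
      · exact Complex.continuous_ofReal.comp (by fun_prop)
      · exact hLc.comp (continuous_const.mul (cont_eC.comp continuous_snd))
  have habsRe : ∀ t : ℝ, ‖((R : ℝ) : ℂ) * eC t‖ = R := by
    intro t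
    rw [norm_mul, abs_eC, mul_one, Complex.norm_real, Real.norm_eq_abs, abs_of_pos hRpos]
  have hAne : ∀ s ∈ Set.Icc (0 : ℝ) 1, ∀ t : ℝ, A s t ≠ 0 := by
    intro s hs t
    rcases le_or_gt (2 * s) 1 with h1 | h1
    · have hσ : max (2 * s - 1) 0 = 0 := max_eq_right (by linarith)
      rw [hAdef]
      simp only [hσ, Complex.ofReal_zero, zero_mul, add_zero, sub_zero, Complex.ofReal_one,
        one_mul]
      exact h0 _
    · have hσ : max (2 * s - 1) 0 = 2 * s - 1 := max_eq_left (by linarith)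
      have hmin : min (2 * s) 1 = 1 := min_eq_right (by linarith)
      have hs1 : s ≤ 1 := hs.2
      intro hc
      rw [hAdef] at hc
      simp only [hσ, hmin, one_mul] at hc
      have hwabs : ‖((R : ℝ) : ℂ) * eC t‖ = R := habsRe t
      set w : ℂ := ((R : ℝ) : ℂ) * eC t with hwdef
      have hest := Hest w hwabs
      have key : L w = ((1 - (2 * s - 1) : ℝ) : ℂ) * (L w - hh M M₂ p w) := by
        push_cast at hc ⊢
        linear_combination hc
      have h1σ : |1 - (2 * s - 1)| ≤ 1 := by
        rw [abs_of_nonneg (by linarith)]; linarith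
      have habskey : ‖L w‖ ≤ ‖hh M M₂ p w - L w‖ := by
        calc ‖L w‖
            = ‖(((1 - (2 * s - 1) : ℝ)) : ℂ)‖ *
              ‖L w - hh M M₂ p w‖ := by rw [← norm_mul, ← key]
          _ = |1 - (2 * s - 1)| * ‖L w - hh M M₂ p w‖ := by
              rw [Complex.norm_real, Real.norm_eq_abs]
          _ ≤ 1 * ‖L w - hh M M₂ p w‖ :=
              mul_le_mul_of_nonneg_right h1σ (norm_nonneg _)
          _ = ‖hh M M₂ p w - L w‖ := by
              rw [one_mul, norm_sub_rev]
      linarith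
  -- minimum of |A| on the unit square
  set K : Set (ℝ × ℝ) := Set.Icc (0 : ℝ) 1 ×ˢ Set.Icc (0 : ℝ) 1 with hKdef
  have hKc : IsCompact K := isCompact_Icc.prod isCompact_Icc
  obtain ⟨q₀, hq₀K, hq₀min⟩ := hKc.exists_isMinOn
    ⟨(0, 0), by rw [hKdef]; exact Set.mem_prod.2 ⟨⟨le_rfl, zero_le_one⟩, ⟨le_rfl, zero_le_one⟩⟩⟩
    ((continuous_norm.comp hAcont).continuousOn)
  set m := ‖A q₀.1 q₀.2‖ with hmdef
  have hm0 : 0 < m := norm_pos_iff.mpr (hAne q₀.1 hq₀K.1 q₀.2)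
  have hmle : ∀ s t : ℝ, s ∈ Set.Icc (0 : ℝ) 1 → t ∈ Set.Icc (0 : ℝ) 1 →
      m ≤ ‖A s t‖ := by
    intro s t hs ht
    exact isMinOn_iff.1 hq₀min (s, t) (Set.mem_prod.2 ⟨hs, ht⟩)
  -- uniform continuity
  have hUC := hKc.uniformContinuousOn_of_continuous hAcont.continuousOn
  obtain ⟨δ₂, hδ₂pos, hδ₂⟩ := Metric.uniformContinuousOn_iff.1 hUC (m / 2) (by positivity)
  obtain ⟨n, hn⟩ := exists_nat_gt (max 4 (1 / δ₂))
  have hn4 : (4 : ℝ) ≤ (n : ℝ) := le_of_lt ((le_max_left _ _).trans_lt hn)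
  have hnpos : (0 : ℝ) < (n : ℝ) := by linarith
  have hn0 : (n : ℝ) ≠ 0 := ne_of_gt hnpos
  have h1nδ : 1 / (n : ℝ) < δ₂ := by
    have h := (le_max_right 4 (1 / δ₂)).trans_lt hn
    rw [div_lt_iff₀ hδ₂pos] at h
    rw [div_lt_iff₀ hnpos]
    linarith
  have hstep : ∀ s ∈ Set.Icc (0 : ℝ) 1, ∀ k : ℕ, k < n →
      ‖A s (((k : ℝ) + 1) / n) - A s ((k : ℝ) / n)‖ < m / 2 := by
    intro s hs k hk
    have hk1 : ((k : ℝ) + 1) ≤ (n : ℝ) := by exact_mod_cast Nat.succ_le_of_lt hk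
    have ht1 : ((k : ℝ) + 1) / n ∈ Set.Icc (0 : ℝ) 1 :=
      ⟨by positivity, by rw [div_le_one hnpos]; exact hk1⟩
    have ht0 : (k : ℝ) / n ∈ Set.Icc (0 : ℝ) 1 :=
      ⟨by positivity, by rw [div_le_one hnpos]; linarith⟩
    have hdist : dist ((s, ((k : ℝ) + 1) / n) : ℝ × ℝ) (s, (k : ℝ) / n) < δ₂ := by
      rw [Prod.dist_eq]
      have h1 : dist s s = 0 := dist_self s
      have h2 : dist (((k : ℝ) + 1) / n) ((k : ℝ) / n) = 1 / n := by
        rw [Real.dist_eq, div_sub_div_same]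
        rw [show ((k : ℝ) + 1 - k) = 1 by ring]
        rw [abs_of_pos (by positivity)]
      rw [h1, h2]
      rw [max_eq_right (by positivity)]
      exact h1nδ
    have := hδ₂ _ (Set.mem_prod.2 ⟨hs, ht1⟩) _ (Set.mem_prod.2 ⟨hs, ht0⟩) hdist
    rwa [Complex.dist_eq] at this
  -- the discrete winding sum
  set V : ℝ → ℂ := fun s =>
    ∑ k ∈ Finset.range n, Complex.log (A s (((k : ℝ) + 1) / n) / A s ((k : ℝ) / n)) with hVdef
  have htmem : ∀ k : ℕ, k ≤ n → ((k : ℝ) / n) ∈ Set.Icc (0 : ℝ) 1 := by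
    intro k hk
    exact ⟨by positivity, by rw [div_le_one hnpos]; exact_mod_cast hk⟩
  have hratio : ∀ s ∈ Set.Icc (0 : ℝ) 1, ∀ k : ℕ, k < n →
      (1 : ℝ) / 2 ≤ (A s (((k : ℝ) + 1) / n) / A s ((k : ℝ) / n)).re := by
    intro s hs k hk
    have hb : m ≤ ‖A s ((k : ℝ) / n)‖ := hmle s _ hs (htmem k (le_of_lt hk))
    have hbne : A s ((k : ℝ) / n) ≠ 0 := hAne s hs _
    have hdiff := hstep s hs k hk
    have h1 : ‖A s (((k : ℝ) + 1) / n) / A s ((k : ℝ) / n) - 1‖ ≤ 1 / 2 := by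
      have heq : A s (((k : ℝ) + 1) / n) / A s ((k : ℝ) / n) - 1 =
          (A s (((k : ℝ) + 1) / n) - A s ((k : ℝ) / n)) / A s ((k : ℝ) / n) := by
        field_simp
      rw [heq, norm_div, div_le_iff₀ (lt_of_lt_of_le hm0 hb)]
      nlinarith
    have h2 := Complex.re_le_norm (1 - A s (((k : ℝ) + 1) / n) / A s ((k : ℝ) / n))
    rw [norm_sub_rev] at h2
    have h3 : (1 - A s (((k : ℝ) + 1) / n) / A s ((k : ℝ) / n)).re =
        1 - (A s (((k : ℝ) + 1) / n) / A s ((k : ℝ) / n)).re := by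
      simp [Complex.sub_re]
    linarith
  have hVimcont : ContinuousOn (fun s => (V s).im) (Set.Icc (0 : ℝ) 1) := by
    apply Complex.continuous_im.comp_continuousOn
    rw [hVdef]
    apply continuousOn_finset_sum
    intro k hk
    rw [Finset.mem_range] at hk
    intro s hs
    apply ContinuousAt.continuousWithinAt
    have hAct : ∀ t : ℝ, ContinuousAt (fun s : ℝ => A s t) s :=
      fun t => (hAcont.comp (continuous_id.prodMk continuous_const)).continuousAt
    have hbne : A s ((k : ℝ) / n) ≠ 0 := hAne s hs _
    refine ContinuousAt.clog ((hAct _).div (hAct _) hbne) ?_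
    exact Complex.mem_slitPlane_iff.2 (Or.inl (by have := hratio s hs k hk; linarith))
  have hVint : ∀ s ∈ Set.Icc (0 : ℝ) 1, ∃ kk : ℤ,
      V s = (kk : ℂ) * (2 * (Real.pi : ℂ) * Complex.I) := by
    intro s hs
    rw [← Complex.exp_eq_one_iff, hVdef, Complex.exp_sum]
    set f : ℕ → ℂ := fun k => A s ((k : ℝ) / n) with hfdef
    have hfne : ∀ k, k ≤ n → f k ≠ 0 := fun k _ => hAne s hs _
    calc (∏ k ∈ Finset.range n,
            Complex.exp (Complex.log (A s (((k : ℝ) + 1) / n) / A s ((k : ℝ) / n))))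
        = ∏ k ∈ Finset.range n, f (k + 1) / f k := by
          refine Finset.prod_congr rfl fun k hk => ?_
          rw [Finset.mem_range] at hk
          rw [Complex.exp_log (div_ne_zero (hAne s hs _) (hAne s hs _))]
          rw [hfdef]
          congr 2
          push_cast
          ring
      _ = f n / f 0 := prod_div_telescope f n hfne
      _ = 1 := by
          rw [hfdef]
          simp only [Nat.cast_zero, zero_div]
          have h1 : ((n : ℝ)) / n = 1 := div_self hn0
          have hA10 : A s 1 = A s 0 := by
            rw [hAdef]
            simp only [eC_one, eC_zero]
          rw [h1, hA10, div_self (hAne s hs 0)]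
  -- value at s = 0
  have hA0t : ∀ t : ℝ, A 0 t = hh M M₂ p 0 := by
    intro t
    have e1 : max (2 * (0 : ℝ) - 1) 0 = 0 := max_eq_right (by norm_num)
    have e2 : min (2 * (0 : ℝ)) 1 = 0 := (min_eq_left (by norm_num)).trans (by norm_num)
    simp only [hAdef, e1, e2]
    simp
  have hV0 : V 0 = 0 := by
    rw [hVdef]
    apply Finset.sum_eq_zero
    intro k _
    rw [hA0t, hA0t, div_self (h0 0), Complex.log_one]
  -- value at s = 1
  have hphiform : ∀ t : ℝ, phi p (((R : ℝ) : ℂ) * eC t) =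
      ((R ^ (p - 2) : ℝ) : ℂ) * (((R : ℝ) : ℂ) * eC t) := by
    intro t
    rw [phi, habsRe t]
  set Kc : ℂ := (((R ^ (p - 2) : ℝ) : ℂ) * ((R : ℝ) : ℂ)) *
      ((((R ^ (p - 2) : ℝ)) : ℂ) * ((R : ℝ) : ℂ)) * β with hKcdef
  have hKcne : Kc ≠ 0 := by
    have h1 : ((R ^ (p - 2) : ℝ) : ℂ) ≠ 0 := by
      rw [Ne, Complex.ofReal_eq_zero]
      exact ne_of_gt (Real.rpow_pos_of_pos hRpos _)
    have h2 : ((R : ℝ) : ℂ) ≠ 0 := by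
      rw [Ne, Complex.ofReal_eq_zero]
      exact ne_of_gt hRpos
    exact mul_ne_zero (mul_ne_zero (mul_ne_zero h1 h2) (mul_ne_zero h1 h2)) hβ
  have hA1t : ∀ t : ℝ, A 1 t = Kc * Complex.exp (((4 * Real.pi * t : ℝ) : ℂ) * Complex.I) := by
    intro t
    have e1 : max (2 * (1 : ℝ) - 1) 0 = 1 := by norm_num
    have e2 : min (2 * (1 : ℝ)) 1 = 1 := min_eq_right (by norm_num)
    simp only [hAdef, e1, e2]
    simp only [sub_self, Complex.ofReal_zero, zero_mul, zero_add, Complex.ofReal_one, one_mul]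
    have hee : eC t * eC t = Complex.exp (((4 * Real.pi * t : ℝ) : ℂ) * Complex.I) := by
      rw [eC, ← Complex.exp_add]
      congr 1
      push_cast
      ring
    rw [hLdef]
    simp only
    rw [hphiform, hKcdef, ← hee]
    ring
  have hnC : ((n : ℝ) : ℂ) ≠ 0 := by
    rw [Ne, Complex.ofReal_eq_zero]
    exact hn0
  have hlog1 : ∀ k : ℕ, Complex.log (A 1 (((k : ℝ) + 1) / n) / A 1 ((k : ℝ) / n)) =
      ((4 * Real.pi / n : ℝ) : ℂ) * Complex.I := by
    intro k
    rw [hA1t, hA1t, mul_div_mul_left _ _ hKcne, ← Complex.exp_sub]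
    have harg : ((4 * Real.pi * (((k : ℝ) + 1) / n) : ℝ) : ℂ) * Complex.I -
        ((4 * Real.pi * ((k : ℝ) / n) : ℝ) : ℂ) * Complex.I
        = ((4 * Real.pi / n : ℝ) : ℂ) * Complex.I := by
      push_cast
      field_simp
      ring
    rw [harg]
    have him : (((4 * Real.pi / n : ℝ) : ℂ) * Complex.I).im = 4 * Real.pi / n := by
      simp
    apply Complex.log_exp
    · rw [him]
      have : 0 < 4 * Real.pi / n := by positivity
      linarith [Real.pi_pos]
    · rw [him, div_le_iff₀ hnpos]
      nlinarith [Real.pi_pos]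
  have hV1im : (V 1).im = 4 * Real.pi := by
    rw [hVdef]
    simp only
    rw [Finset.sum_congr rfl fun k _ => hlog1 k, Finset.sum_const, Finset.card_range,
      nsmul_eq_mul]
    have h : ((n : ℂ) * (((4 * Real.pi / n : ℝ) : ℂ) * Complex.I)).im
        = (n : ℝ) * (4 * Real.pi / n) := by
      simp
    rw [h]
    field_simp
  have hV0im : (V 0).im = 0 := by rw [hV0]; simp
  have hpimem : Real.pi ∈ Set.Icc ((fun s => (V s).im) 0) ((fun s => (V s).im) 1) := by
    simp only
    rw [hV0im, hV1im]
    constructor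
    · exact le_of_lt Real.pi_pos
    · nlinarith [Real.pi_pos]
  obtain ⟨s, hs, hfs⟩ := intermediate_value_Icc zero_le_one hVimcont hpimem
  obtain ⟨kk, hkk⟩ := hVint s hs
  simp only at hfs
  rw [hkk] at hfs
  have him2 : (((kk : ℂ)) * (2 * (Real.pi : ℂ) * Complex.I)).im = (kk : ℝ) * (2 * Real.pi) := by
    simp
  rw [him2] at hfs
  have hcancel : (2 * (kk : ℝ)) * Real.pi = 1 * Real.pi := by
    linear_combination hfs
  have h2k : (2 * (kk : ℝ)) = 1 := mul_right_cancel₀ (ne_of_gt Real.pi_pos) hcancel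
  have h2k' : ((2 * kk : ℤ) : ℝ) = ((1 : ℤ) : ℝ) := by push_cast; linarith
  have := Int.cast_injective h2k'
  omega


lemma sol_h (M M₂ : Matrix (Fin 2) (Fin 2) ℂ) (p : ℝ) (w : ℂ) (hw : hh M M₂ p w = 0) :
    ∃ z : Fin 2 → ℂ, z ≠ 0 ∧ ∃ lam : ℂ, Fv M M₂ p z = lam • fun i => phi p (z i) := by
  refine ⟨![1, w], ?_, Fv M M₂ p ![1, w] 0, ?_⟩
  · intro h
    have := congrFun h 0
    simp at this
  · have hF1 : Fv M M₂ p ![1, w] 1 = phi p w * Fv M M₂ p ![1, w] 0 :=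
      (sub_eq_zero.mp hw).symm
    funext i
    fin_cases i
    · simp [phi_one]
    · simp [hF1]
      ring

lemma sol_beta (M M₂ : Matrix (Fin 2) (Fin 2) ℂ) (p : ℝ) (hb : Fv M M₂ p ![0, 1] 0 = 0) :
    ∃ z : Fin 2 → ℂ, z ≠ 0 ∧ ∃ lam : ℂ, Fv M M₂ p z = lam • fun i => phi p (z i) := by
  refine ⟨![0, 1], ?_, Fv M M₂ p ![0, 1] 1, ?_⟩
  · intro h
    have := congrFun h 1
    simp at this
  · funext i
    fin_cases i
    · simp [phi_zero, hb]
    · simp [phi_one]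

/-- In dimension `n = 2`, the nonlinear eigenvalue problem
`Mᴴ(|M₂z|^{p−2} ∘ Mz) = λ (|z|^{p−2} ∘ z)` has nonempty spectrum. -/
theorem spectrum_nonempty_dim_two (M M₂ : Matrix (Fin 2) (Fin 2) ℂ)
    (p : ℝ) (hp : 2 ≤ p) :
    ∃ z : Fin 2 → ℂ, z ≠ 0 ∧ ∃ lam : ℂ,
      Mᴴ.mulVec
          (fun i => ((‖M₂.mulVec z i‖ ^ (p - 2) : ℝ) : ℂ) * M.mulVec z i) =
        lam • fun i => phi p (z i) := by
  by_cases hβ : Fv M M₂ p ![0, 1] 0 = 0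
  · exact sol_beta M M₂ p hβ
  by_cases hz : ∃ w, hh M M₂ p w = 0
  · obtain ⟨w, hw⟩ := hz
    exact sol_h M M₂ p w hw
  · push_neg at hz
    exact absurd (noSol M M₂ p hp hβ hz) not_false
end
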